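/- Let T ≥ 2 be an integer, let W be a finite index set, and for each i ∈ W let integers s_i, e_i satisfy 1 ≤ s_i < e_i ≤ T. Then there exist an integer P ≥ 0 and pairwise disjoint nonempty subsets W^1, …, W^P of W such that: (ii) Σ_{p=1}^P |W^p| ≥ |W| / (3·(log₂(T) + 1)); and (iii) setting s̃_p = min_{i∈W^p} s_i and ẽ_p = max_{i∈W^p} e_i, one has 1 ≤ s̃_1 < ẽ_1 ≤ s̃_2 < ẽ_2 ≤ … ≤ s̃_P < ẽ_P ≤ T, and moreover max_{i∈W^p} s_i ≤ min_{i∈W^p} e_i for each 1 ≤ p ≤ P. -/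

import Mathlib

private lemma val_ge_of_dvd' {n k : ℕ} (hn : n ≠ 0) (h : 2 ^ k ∣ n) : k ≤ padicValNat 2 n := by
  rw [← Nat.factorization_def n Nat.prime_two]
  exact (Nat.Prime.pow_dvd_iff_le_factorization Nat.prime_two hn).mp h

private lemma dyadic_bounds' {a b n : ℕ} (h1 : a < n) (h2 : n ≤ b)
    (hmax : ∀ x, a < x → x ≤ b → padicValNat 2 x ≤ padicValNat 2 n) :
    b < n + 2 ^ padicValNat 2 n ∧ n ≤ a + 2 ^ padicValNat 2 n ∧
      ¬ 2 ∣ n / 2 ^ padicValNat 2 n := by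
  set v := padicValNat 2 n with hv
  have hn0 : n ≠ 0 := by omega
  have hdvd : 2 ^ v ∣ n := pow_padicValNat_dvd
  set m := n / 2 ^ v with hmdef
  have hnm : 2 ^ v * m = n := Nat.mul_div_cancel' hdvd
  have hpos : 0 < 2 ^ v := Nat.pow_pos (n := v) (by norm_num)
  have hodd : ¬ 2 ∣ m := by
    intro hd
    obtain ⟨m', hm'⟩ := hd
    have hdd : 2 ^ (v + 1) ∣ n := ⟨m', by rw [pow_succ, ← hnm, hm']; ring⟩
    have := val_ge_of_dvd' hn0 hdd
    omega
  have hm1 : 1 ≤ m := by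
    rcases Nat.eq_zero_or_pos m with h | h
    · rw [h] at hnm; omega
    · exact h
  refine ⟨?_, ?_, hodd⟩
  · by_contra hc
    push_neg at hc
    obtain ⟨m', hm'⟩ : 2 ∣ m + 1 := by omega
    have hdd : 2 ^ (v + 1) ∣ n + 2 ^ v :=
      ⟨m', by rw [pow_succ, ← hnm]; calc 2 ^ v * m + 2 ^ v = 2 ^ v * (m + 1) := by ring
        _ = 2 ^ v * (2 * m') := by rw [hm']
        _ = 2 ^ v * 2 * m' := by ring⟩
    have h3 := hmax (n + 2 ^ v) (by omega) hc
    have h4 := val_ge_of_dvd' (by omega) hdd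
    omega
  · by_contra hc
    push_neg at hc
    obtain ⟨m'', hm''⟩ : 2 ∣ m - 1 := by omega
    have hx1 : a < n - 2 ^ v := by omega
    have hx2 : n - 2 ^ v ≤ b := by omega
    have hxeq : n - 2 ^ v = 2 ^ (v + 1) * m'' := by
      rw [pow_succ, ← hnm]
      calc 2 ^ v * m - 2 ^ v = 2 ^ v * (m - 1) := by
            rw [Nat.mul_sub]; ring_nf
        _ = 2 ^ v * (2 * m'') := by rw [← hm'']
        _ = 2 ^ v * 2 * m'' := by ring
    have hdd : 2 ^ (v + 1) ∣ n - 2 ^ v := ⟨m'', hxeq⟩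
    have h3 := hmax (n - 2 ^ v) hx1 hx2
    have h4 := val_ge_of_dvd' (by omega) hdd
    omega

private lemma dyadic_cross' {a b a' b' n n' v : ℕ}
    (h1 : a < n) (h2 : n ≤ b)
    (hmax : ∀ x, a < x → x ≤ b → padicValNat 2 x ≤ padicValNat 2 n)
    (h1' : a' < n') (h2' : n' ≤ b')
    (hmax' : ∀ x, a' < x → x ≤ b' → padicValNat 2 x ≤ padicValNat 2 n')
    (hv : padicValNat 2 n = v) (hv' : padicValNat 2 n' = v) (hlt : n < n') :
    b < a' := by
  obtain ⟨A, -, hodd⟩ := dyadic_bounds' h1 h2 hmax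
  obtain ⟨-, B, hodd'⟩ := dyadic_bounds' h1' h2' hmax'
  rw [hv] at A hodd
  rw [hv'] at B hodd'
  have hdvd : 2 ^ v ∣ n := hv ▸ pow_padicValNat_dvd
  have hdvd' : 2 ^ v ∣ n' := hv' ▸ pow_padicValNat_dvd
  have hnm : 2 ^ v * (n / 2 ^ v) = n := Nat.mul_div_cancel' hdvd
  have hnm' : 2 ^ v * (n' / 2 ^ v) = n' := Nat.mul_div_cancel' hdvd'
  set m := n / 2 ^ v
  set m' := n' / 2 ^ v
  have hpos : 0 < 2 ^ v := Nat.pow_pos (n := v) (by norm_num)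
  have hmm : m < m' := by
    by_contra hc
    push_neg at hc
    have := Nat.mul_le_mul_left (2 ^ v) hc
    omega
  have hm2 : m + 2 ≤ m' := by omega
  have hgap : n + 2 ^ v + 2 ^ v ≤ n' := by
    have := Nat.mul_le_mul_left (2 ^ v) hm2
    rw [Nat.mul_add] at this
    omega
  omega

theorem disjoint_blocks_of_intervals {ι : Type*} [DecidableEq ι]
    (T : ℕ) (hT : 2 ≤ T) (W : Finset ι) (s e : ι → ℕ)
    (hse : ∀ i ∈ W, 1 ≤ s i ∧ s i < e i ∧ e i ≤ T) :
    ∃ (P : ℕ) (V : Fin P → Finset ι) (hne : ∀ p, (V p).Nonempty),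
      (∀ p, V p ⊆ W) ∧
      (∀ p q : Fin P, p ≠ q → Disjoint (V p) (V q)) ∧
      ((W.card : ℝ) / (3 * (Real.logb 2 T + 1)) ≤ ∑ p, ((V p).card : ℝ)) ∧
      (∀ p : Fin P, 1 ≤ (V p).inf' (hne p) s) ∧
      (∀ p : Fin P, (V p).inf' (hne p) s < (V p).sup' (hne p) e) ∧
      (∀ p q : Fin P, p < q → (V p).sup' (hne p) e ≤ (V q).inf' (hne q) s) ∧
      (∀ p : Fin P, (V p).sup' (hne p) e ≤ T) ∧
      (∀ p : Fin P, (V p).sup' (hne p) s ≤ (V p).inf' (hne p) e) := by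
  classical
  -- choose, for each i ∈ W, a point t i in (s i, e i] of maximal 2-adic valuation
  have hex : ∀ i : ι, ∃ n : ℕ, i ∈ W →
      (s i < n ∧ n ≤ e i ∧ ∀ x, s i < x → x ≤ e i →
        padicValNat 2 x ≤ padicValNat 2 n) := by
    intro i
    by_cases hi : i ∈ W
    · obtain ⟨h1, h2, h3⟩ := hse i hi
      obtain ⟨n, hn, hmax⟩ := Finset.exists_max_image (Finset.Ioc (s i) (e i))
        (padicValNat 2) ⟨e i, Finset.mem_Ioc.mpr ⟨h2, le_refl _⟩⟩
      rw [Finset.mem_Ioc] at hn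
      exact ⟨n, fun _ => ⟨hn.1, hn.2, fun x hx1 hx2 =>
        hmax x (Finset.mem_Ioc.mpr ⟨hx1, hx2⟩)⟩⟩
    · exact ⟨0, fun h => absurd h hi⟩
  choose t ht using hex
  set L := Nat.log 2 T + 1 with hL
  -- level bound
  have hlevel : ∀ i ∈ W, padicValNat 2 (t i) ∈ Finset.range L := by
    intro i hi
    obtain ⟨h1, h2, -⟩ := ht i hi
    obtain ⟨hs1, -, h3⟩ := hse i hi
    have ht0 : t i ≠ 0 := by omega
    have hle : 2 ^ padicValNat 2 (t i) ≤ t i :=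
      Nat.le_of_dvd (Nat.pos_of_ne_zero ht0) pow_padicValNat_dvd
    have : 2 ^ padicValNat 2 (t i) ≤ T := by omega
    rw [Finset.mem_range, hL]
    have := (Nat.le_log_iff_pow_le (by norm_num) (by omega)).mpr this
    omega
  -- pigeonhole: choose the most popular level v0
  obtain ⟨v0, -, hv0max⟩ := Finset.exists_max_image (Finset.range L)
    (fun v => (W.filter fun i => padicValNat 2 (t i) = v).card) ⟨0, by simp [hL]⟩
  set W' := W.filter (fun i => padicValNat 2 (t i) = v0) with hW'
  have hWcard : W.card ≤ L * W'.card := by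
    calc W.card = ∑ v ∈ Finset.range L,
          (W.filter fun i => padicValNat 2 (t i) = v).card :=
          Finset.card_eq_sum_card_fiberwise hlevel
      _ ≤ ∑ _v ∈ Finset.range L, W'.card :=
          Finset.sum_le_sum (fun v hv => hv0max v hv)
      _ = L * W'.card := by simp [Finset.sum_const, Finset.card_range]
  set S := W'.image t with hS
  set P := S.card with hP
  set iso := S.orderIsoOfFin rfl with hiso
  set np : Fin P → ℕ := fun p => ((iso p : S) : ℕ) with hnp
  set V : Fin P → Finset ι := fun p => W'.filter (fun i => t i = np p) with hV
  have hVW' : ∀ p, V p ⊆ W' := fun p => Finset.filter_subset _ _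
  have hVW : ∀ p, V p ⊆ W := fun p => (hVW' p).trans (Finset.filter_subset _ _)
  have hne : ∀ p, (V p).Nonempty := by
    intro p
    have hmem : np p ∈ S := (iso p).2
    rw [hS, Finset.mem_image] at hmem
    obtain ⟨i, hi, hti⟩ := hmem
    exact ⟨i, Finset.mem_filter.mpr ⟨hi, hti⟩⟩
  -- basic facts for elements of V p
  have hVfact : ∀ p : Fin P, ∀ i ∈ V p, i ∈ W ∧ padicValNat 2 (t i) = v0 ∧ t i = np p := by
    intro p i hi
    rw [hV, Finset.mem_filter, hW', Finset.mem_filter] at hi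
    exact ⟨hi.1.1, hi.1.2, hi.2⟩
  refine ⟨P, V, hne, hVW, ?_, ?_, ?_, ?_, ?_, ?_, ?_⟩
  · -- disjoint
    intro p q hpq
    rw [Finset.disjoint_left]
    intro i hip hiq
    have h1 := (hVfact p i hip).2.2
    have h2 := (hVfact q i hiq).2.2
    have hnpq : np p = np q := by rw [← h1, ← h2]
    have : (iso p : S) = (iso q : S) := Subtype.coe_injective hnpq
    exact hpq (iso.injective this)
  · -- cardinality
    have hsum : ∑ p : Fin P, (V p).card = W'.card := by
      have h1 : W'.card = ∑ b ∈ S, (W'.filter (fun i => t i = b)).card :=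
        Finset.card_eq_sum_card_fiberwise (fun i hi => Finset.mem_image_of_mem t hi)
      rw [h1, ← Finset.sum_attach S (fun b => (W'.filter (fun i => t i = b)).card)]
      rw [← Finset.univ_eq_attach]
      exact Fintype.sum_equiv iso.toEquiv _ _ (fun p => rfl)
    have hlogb0 : (0:ℝ) ≤ Real.logb 2 T :=
      Real.logb_nonneg (by norm_num) (by exact_mod_cast Nat.one_le_iff_ne_zero.mpr (by omega))
    have hlogb : (Nat.log 2 T : ℝ) ≤ Real.logb 2 T := Real.natLog_le_logb T 2
    have hden : (0:ℝ) < 3 * (Real.logb 2 T + 1) := by nlinarith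
    rw [div_le_iff₀ hden]
    have hsum' : ∑ p : Fin P, ((V p).card : ℝ) = (W'.card : ℝ) := by
      rw [← Nat.cast_sum, hsum]
    rw [hsum']
    have hWc : (W.card : ℝ) ≤ (L : ℝ) * (W'.card : ℝ) := by
      exact_mod_cast hWcard
    have hLle : (L : ℝ) ≤ Real.logb 2 T + 1 := by
      rw [hL]
      push_cast
      linarith
    nlinarith [Nat.cast_nonneg (α := ℝ) W'.card]
  · -- 1 ≤ inf' s
    intro p
    exact Finset.le_inf' _ _ (fun i hi => (hse i ((hVfact p i hi).1)).1)
  · -- inf' s < sup' e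
    intro p
    obtain ⟨i, hi⟩ := hne p
    have h1 : (V p).inf' (hne p) s ≤ s i := Finset.inf'_le s hi
    have h2 : e i ≤ (V p).sup' (hne p) e := Finset.le_sup' e hi
    have h3 := (hse i ((hVfact p i hi).1)).2.1
    omega
  · -- cross ordering
    intro p q hpq
    apply Finset.sup'_le
    intro i hi
    apply Finset.le_inf'
    intro j hj
    obtain ⟨hiW, hiv, hit⟩ := hVfact p i hi
    obtain ⟨hjW, hjv, hjt⟩ := hVfact q j hj
    obtain ⟨hi1, hi2, hi3⟩ := ht i hiW
    obtain ⟨hj1, hj2, hj3⟩ := ht j hjW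
    have hlt : t i < t j := by
      rw [hit, hjt, hnp]
      exact Subtype.coe_lt_coe.mpr (iso.strictMono hpq)
    exact (dyadic_cross' hi1 hi2 hi3 hj1 hj2 hj3 hiv hjv hlt).le
  · -- sup' e ≤ T
    intro p
    exact Finset.sup'_le _ _ (fun i hi => (hse i ((hVfact p i hi).1)).2.2)
  · -- sup' s ≤ inf' e
    intro p
    apply Finset.sup'_le
    intro i hi
    apply Finset.le_inf'
    intro j hj
    obtain ⟨hiW, -, hit⟩ := hVfact p i hi
    obtain ⟨hjW, -, hjt⟩ := hVfact p j hj
    have h1 := (ht i hiW).1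
    have h2 := (ht j hjW).2.1
    omega
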